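/- If n ≥ 2k+1, then the Kneser graph K(n,k) is connected. -/

import Mathlib

/-- The Kneser graph `K(n,k)`: vertices are the `k`-element subsets of an
`n`-element set, two vertices adjacent iff the corresponding subsets are disjoint. -/
def kneserGraph (n k : ℕ) : SimpleGraph {s : Finset (Fin n) // s.card = k} where
  Adj a b := a ≠ b ∧ Disjoint a.1 b.1
  symm := by
    constructor
    intro a b h
    exact ⟨h.1.symm, h.2.symm⟩
  loopless := by
    constructor
    intro a h
    exact h.1 rfl

instance (n k : ℕ) : DecidableRel (kneserGraph n k).Adj := fun a b =>
  inferInstanceAs (Decidable (a ≠ b ∧ Disjoint a.1 b.1))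


/-- If `n ≥ 2k + 1`, then the Kneser graph `K(n,k)` is connected. -/
theorem kneser_connected (n k : ℕ) (h : 2 * k + 1 ≤ n) :
    (kneserGraph n k).Connected := by
  have hkn : k ≤ n := by omega
  obtain ⟨s₀, hs₀sub, hs₀⟩ := Finset.exists_subset_card_eq (s := (Finset.univ : Finset (Fin n))) (n := k)
    (by simpa using hkn)
  have hne : Nonempty {s : Finset (Fin n) // s.card = k} := ⟨⟨s₀, hs₀⟩⟩
  rw [SimpleGraph.connected_iff]; refine ⟨?_, hne⟩
  rcases Nat.eq_zero_or_pos k with hk0 | hk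
  · subst hk0
    intro a b
    have hab : a = b := Subtype.ext (by
      rw [Finset.card_eq_zero.mp a.2, Finset.card_eq_zero.mp b.2])
    exact hab ▸ SimpleGraph.Reachable.refl _
  · have key : ∀ d (a b : {s : Finset (Fin n) // s.card = k}),
        (a.1 \ b.1).card ≤ d → (kneserGraph n k).Reachable a b := by
      intro d
      induction d with
      | zero =>
        intro a b hd
        have he : a.1 \ b.1 = ∅ := Finset.card_eq_zero.mp (Nat.le_zero.mp hd)
        have hsub : a.1 ⊆ b.1 := Finset.sdiff_eq_empty_iff_subset.mp he
        have hab : a = b := Subtype.ext (Finset.eq_of_subset_of_card_le hsub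
          (by rw [a.2, b.2]))
        exact hab ▸ SimpleGraph.Reachable.refl _
      | succ d ih =>
        intro a b hd
        by_cases hz : (a.1 \ b.1).card ≤ d
        · exact ih a b hz
        · have hcard : (a.1 \ b.1).card = d + 1 := by omega
          obtain ⟨x, hx⟩ := Finset.card_pos.mp (by omega : 0 < (a.1 \ b.1).card)
          have hcomm : (b.1 \ a.1).card = d + 1 := by
            rw [Finset.card_sdiff_comm (by rw [b.2, a.2])]; exact hcard
          obtain ⟨y, hy⟩ := Finset.card_pos.mp (by omega : 0 < (b.1 \ a.1).card)
          have hxa : x ∈ a.1 := (Finset.mem_sdiff.mp hx).1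
          have hxb : x ∉ b.1 := (Finset.mem_sdiff.mp hx).2
          have hyb : y ∈ b.1 := (Finset.mem_sdiff.mp hy).1
          have hya : y ∉ a.1 := (Finset.mem_sdiff.mp hy).2
          set s' : Finset (Fin n) := insert y (a.1.erase x) with hs'
          have hs'card : s'.card = k := by
            rw [hs', Finset.card_insert_of_notMem (fun hm => hya (Finset.mem_of_mem_erase hm)),
              Finset.card_erase_of_mem hxa, a.2]
            omega
          -- union is small
          have hunion : (a.1 ∪ s').card ≤ k + 1 := by
            have : a.1 ∪ s' ⊆ insert y a.1 := by
              intro z hz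
              rcases Finset.mem_union.mp hz with hz | hz
              · exact Finset.mem_insert_of_mem hz
              · rcases Finset.mem_insert.mp hz with hz | hz
                · exact hz ▸ Finset.mem_insert_self _ _
                · exact Finset.mem_insert_of_mem (Finset.mem_of_mem_erase hz)
            calc (a.1 ∪ s').card ≤ (insert y a.1).card := Finset.card_le_card this
              _ ≤ a.1.card + 1 := Finset.card_insert_le _ _
              _ = k + 1 := by rw [a.2]
          obtain ⟨u, husub, hucard⟩ := Finset.exists_subset_card_eq
            (s := Finset.univ \ (a.1 ∪ s')) (n := k) (by
              rw [Finset.card_sdiff_of_subset (Finset.subset_univ _), Finset.card_univ, Fintype.card_fin]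
              omega)
          have hdisj : ∀ t : Finset (Fin n), t ⊆ a.1 ∪ s' → Disjoint u t := by
            intro t ht
            refine Finset.disjoint_left.mpr fun z hzu hzt => ?_
            have := husub hzu
            rw [Finset.mem_sdiff] at this
            exact this.2 (ht hzt)
          have hdua : Disjoint u a.1 := hdisj a.1 Finset.subset_union_left
          have hdus : Disjoint u s' := hdisj s' Finset.subset_union_right
          have hune : ∀ t : Finset (Fin n), t.card = k → Disjoint u t → u ≠ t := by
            intro t htc hdt he
            subst he
            have : u = ∅ := (Finset.disjoint_self_iff_empty u).mp hdt
            rw [this] at hucard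
            simp at hucard
            omega
          have adj1 : (kneserGraph n k).Adj a ⟨u, hucard⟩ :=
            ⟨fun he => hune a.1 a.2 hdua (congrArg Subtype.val he).symm, hdua.symm⟩
          have adj2 : (kneserGraph n k).Adj ⟨u, hucard⟩ ⟨s', hs'card⟩ :=
            ⟨fun he => hune s' hs'card hdus (congrArg Subtype.val he), hdus⟩
          have hstep : (s' \ b.1).card ≤ d := by
            have hsub2 : s' \ b.1 ⊆ (a.1 \ b.1).erase x := by
              intro z hz
              rw [Finset.mem_sdiff] at hz
              rcases Finset.mem_insert.mp hz.1 with hzy | hze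
              · exact absurd (hzy ▸ hyb) hz.2
              · refine Finset.mem_erase.mpr ⟨Finset.ne_of_mem_erase hze,
                  Finset.mem_sdiff.mpr ⟨Finset.mem_of_mem_erase hze, hz.2⟩⟩
            calc (s' \ b.1).card ≤ ((a.1 \ b.1).erase x).card := Finset.card_le_card hsub2
              _ = d := by rw [Finset.card_erase_of_mem hx, hcard]; omega
          exact (adj1.reachable.trans adj2.reachable).trans (ih ⟨s', hs'card⟩ b hstep)
    intro a b
    exact key (a.1 \ b.1).card a b le_rfl
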